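/- Let m ≥ 1, p_1,…,p_m ∈ [1,∞) with 1/p = Σ_{k=1}^m 1/p_k, let w_1,…,w_m be weights, set ν = Π_k w_k^{p/p_k}, and let B be a ball such that (|B|^{−1}∫_B ν)^{1/p} · Π_{k=1}^m D_k ≤ C_W, where D_k = (|B|^{−1}∫_B w_k^{−p_k′/p_k})^{1/p_k′} if p_k > 1 (with p_k′ the conjugate exponent, w_k^{−p_k′/p_k} assumed locally integrable) and D_k = (essinf_B w_k)^{−1} if p_k = 1. Then for all measurable functions f_1,…,f_m: Π_{k=1}^m ( |B|^{−1}∫_B |f_k| ) ≤ C_W · ν(B)^{−1/p} · Π_{k=1}^m ( ∫_B |f_k|^{p_k} w_k )^{1/p_k}. -/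

import Mathlib

open MeasureTheory Metric ENNReal

noncomputable section

/-- Euclidean space `ℝ^n`. -/
abbrev Rn (n : ℕ) : Type := EuclideanSpace ℝ (Fin n)

/-- A weight on `ℝ^n`: a measurable, everywhere positive, locally integrable function. -/
def IsWeight {n : ℕ} (w : Rn n → ℝ) : Prop :=
  Measurable w ∧ (∀ x, 0 < w x) ∧ LocallyIntegrable w volume

/-- The weighted measure `w(E) = ∫_E w` of a set `E`, as an extended nonnegative real. -/
def wtMass {n : ℕ} (w : Rn n → ℝ) (E : Set (Rn n)) : ℝ≥0∞ :=
  ∫⁻ x in E, ENNReal.ofReal (w x)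

/-- The weighted `L^p` norm of `f` restricted to a set `E`:
`(∫_E |f|^p w)^(1/p)`. -/
def wtLpOn {n : ℕ} (p : ℝ) (w : Rn n → ℝ) (E : Set (Rn n)) (f : Rn n → ℝ) : ℝ≥0∞ :=
  (∫⁻ x in E, ENNReal.ofReal |f x| ^ p * ENNReal.ofReal (w x)) ^ (1 / p)

/-- The weighted `L^p` norm `‖f‖_{L^p(w)}` on all of `ℝ^n`. -/
def wtLp {n : ℕ} (p : ℝ) (w : Rn n → ℝ) (f : Rn n → ℝ) : ℝ≥0∞ :=
  wtLpOn p w Set.univ f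

/-- The weighted weak `L^p` quasinorm of `f` restricted to a set `E`:
`sup_{t>0} t · w({x ∈ E : |f x| > t})^(1/p)`. -/
def wtWLpOn {n : ℕ} (p : ℝ) (w : Rn n → ℝ) (E : Set (Rn n)) (f : Rn n → ℝ) : ℝ≥0∞ :=
  ⨆ (t : ℝ) (_ : 0 < t), ENNReal.ofReal t * wtMass w {x ∈ E | t < |f x|} ^ (1 / p)

/-- The weighted weak `L^p` quasinorm `‖f‖_{WL^p(w)}` on all of `ℝ^n`. -/
def wtWLp {n : ℕ} (p : ℝ) (w : Rn n → ℝ) (f : Rn n → ℝ) : ℝ≥0∞ :=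
  wtWLpOn p w Set.univ f

/-- The weighted amalgam norm `‖f‖_{(L^p,L^q)^α(w;μ)}`. -/
def amalgamNorm {n : ℕ} (p q α : ℝ) (w μ : Rn n → ℝ) (f : Rn n → ℝ) : ℝ≥0∞ :=
  ⨆ (r : ℝ) (_ : 0 < r),
    (∫⁻ y, (wtMass w (ball y r) ^ (1/α - 1/p - 1/q) * wtLpOn p w (ball y r) f) ^ q *
      ENNReal.ofReal (μ y)) ^ (1/q)

/-- The weighted weak amalgam norm `‖f‖_{(WL^p,L^q)^α(w;μ)}`. -/
def wAmalgamNorm {n : ℕ} (p q α : ℝ) (w μ : Rn n → ℝ) (f : Rn n → ℝ) : ℝ≥0∞ :=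
  ⨆ (r : ℝ) (_ : 0 < r),
    (∫⁻ y, (wtMass w (ball y r) ^ (1/α - 1/p - 1/q) * wtWLpOn p w (ball y r) f) ^ q *
      ENNReal.ofReal (μ y)) ^ (1/q)

/-- The product weight `ν_{w⃗} = ∏_k w_k^{p/p_k}`. -/
def nuW {n m : ℕ} (p : ℝ) (pk : Fin m → ℝ) (w : Fin m → Rn n → ℝ) : Rn n → ℝ :=
  fun x => ∏ k, w k x ^ (p / pk k)

/-- The `k`-th factor in the multilinear `A_{P⃗}` condition on a set `B`:
`(|B|⁻¹ ∫_B w^{-p'/p})^{1/p'}` when `p > 1` (note `p'/p = 1/(p-1)` and `1/p' = (p-1)/p`),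
and `(essinf_B w)⁻¹` when `p = 1`. -/
def apFactor {n : ℕ} (pk : ℝ) (w : Rn n → ℝ) (B : Set (Rn n)) : ℝ≥0∞ :=
  if pk = 1 then (essInf (fun x => ENNReal.ofReal (w x)) (volume.restrict B))⁻¹
  else ((volume B)⁻¹ * ∫⁻ x in B, ENNReal.ofReal (w x ^ (-(1 / (pk - 1))))) ^ ((pk - 1) / pk)

/-- The multilinear `A_{P⃗}` condition with constant `CW`. -/
def MultiAP {n m : ℕ} (p : ℝ) (pk : Fin m → ℝ) (w : Fin m → Rn n → ℝ) (CW : ℝ) : Prop :=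
  ∀ (y : Rn n) (r : ℝ), 0 < r →
    ((volume (ball y r))⁻¹ * wtMass (nuW p pk w) (ball y r)) ^ (1/p) *
      (∏ k, apFactor (pk k) (w k) (ball y r)) ≤ ENNReal.ofReal CW

/-- The `A_∞`-comparison condition with constants `Cc`, `δ`. -/
def AinfCompare {n : ℕ} (w : Rn n → ℝ) (Cc δ : ℝ) : Prop :=
  ∀ (y : Rn n) (r : ℝ), 0 < r → ∀ E : Set (Rn n), MeasurableSet E → E ⊆ ball y r →
    wtMass w E ≤ ENNReal.ofReal Cc * (volume E / volume (ball y r)) ^ δ * wtMass w (ball y r)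

/-- Doubling condition with constant `Cd`. -/
def DoublingWt {n : ℕ} (w : Rn n → ℝ) (Cd : ℝ) : Prop :=
  ∀ (y : Rn n) (r : ℝ), 0 < r →
    wtMass w (ball y (2*r)) ≤ ENNReal.ofReal Cd * wtMass w (ball y r)

/-- Reverse Jensen inequality with constant `CJ`. -/
def RevJensen {n : ℕ} (w : Rn n → ℝ) (CJ : ℝ) : Prop :=
  LocallyIntegrable (fun x => Real.log (w x)) volume ∧
  ∀ (y : Rn n) (r : ℝ), 0 < r →
    (∫ x in ball y r, w x) ≤
      CJ * (volume (ball y r)).toReal *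
        Real.exp ((volume (ball y r)).toReal⁻¹ * ∫ x in ball y r, Real.log (w x))

/-- `T` is a.e. `m`-linear. -/
def AEMultilinear {n m : ℕ} (T : (Fin m → Rn n → ℝ) → Rn n → ℝ) : Prop :=
  ∀ g : Fin m → Rn n → ℝ, (∀ k, Measurable (g k)) →
    ∀ (k : Fin m) (c : ℝ) (h : Rn n → ℝ), Measurable h →
      ∀ᵐ x ∂(volume : Measure (Rn n)),
        T (Function.update g k (fun y => c * g k y + h y)) x =
          c * T g x + T (Function.update g k h) x

/-- The complement of the essential support of `g`: the union of all open sets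
on which `g` vanishes almost everywhere. -/
def essSuppCompl {n : ℕ} (g : Rn n → ℝ) : Set (Rn n) :=
  {x | ∃ U : Set (Rn n), IsOpen U ∧ x ∈ U ∧ ∀ᵐ y ∂(volume.restrict U), g y = 0}

/-- The multilinear size property with constant `A`: for a.e. `x` outside the essential
support of one of the entries, `|T(g⃗)(x)|` is dominated by the standard multilinear
fractional kernel applied to `|g_k|`. -/
def SizeProp {n m : ℕ} (T : (Fin m → Rn n → ℝ) → Rn n → ℝ) (A : ℝ) : Prop :=
  ∀ g : Fin m → Rn n → ℝ, (∀ k, Measurable (g k)) → ∀ k₀ : Fin m,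
    ∀ᵐ x ∂(volume.restrict (essSuppCompl (g k₀))),
      ENNReal.ofReal |T g x| ≤ ENNReal.ofReal A *
        ∫⁻ z : Fin m → Rn n,
          (∏ k, ENNReal.ofReal |g k (z k)|) /
            ENNReal.ofReal ((∑ k, dist x (z k)) ^ (m * n))

/-- `b_B`: the average of `b` over the ball `B(y,r)`. -/
def ballAvg {n : ℕ} (b : Rn n → ℝ) (y : Rn n) (r : ℝ) : ℝ :=
  (volume (ball y r)).toReal⁻¹ * ∫ x in ball y r, b x

/-- The BMO seminorm of `b` is bounded by `M`. -/
def BMOBound {n : ℕ} (b : Rn n → ℝ) (M : ℝ) : Prop :=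
  ∀ (y : Rn n) (r : ℝ), 0 < r →
    (volume (ball y r)).toReal⁻¹ * (∫ x in ball y r, |b x - ballAvg b y r|) ≤ M

/-- The commutator `[b,T]_k` in the `k`-th slot. -/
def commAt {n m : ℕ} (b : Rn n → ℝ) (k : Fin m)
    (T : (Fin m → Rn n → ℝ) → Rn n → ℝ) : (Fin m → Rn n → ℝ) → Rn n → ℝ :=
  fun f x => b x * T f x - T (Function.update f k (fun y => b y * f k y)) x

/-- The multilinear commutator `[Σb⃗, T] = Σ_k [b_k,T]_k`. -/
def sumComm {n m : ℕ} (b : Fin m → Rn n → ℝ)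
    (T : (Fin m → Rn n → ℝ) → Rn n → ℝ) : (Fin m → Rn n → ℝ) → Rn n → ℝ :=
  fun f x => ∑ k, commAt (b k) k T f x

/-- The iterated commutator `[Πb⃗, T] = [b_1,[b_2,…[b_{m-1},[b_m,T]_m]_{m-1}…]_2]_1`. -/
def iterComm {n m : ℕ} (b : Fin m → Rn n → ℝ)
    (T : (Fin m → Rn n → ℝ) → Rn n → ℝ) : (Fin m → Rn n → ℝ) → Rn n → ℝ :=
  (List.finRange m).foldr (fun k S => commAt (b k) k S) T

/-- `Φ(t) = t(1 + log⁺ t)`. -/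
def phiLL (t : ℝ) : ℝ := t * (1 + max (Real.log t) 0)

/-- The `L log L` Luxemburg norm of `f` over `B` with respect to the weight `w`:
`inf {σ > 0 : w(B)⁻¹ ∫_B Φ(|f|/σ) w ≤ 1}` (equal to `⊤` if no such `σ` exists). -/
def llogLOn {n : ℕ} (w : Rn n → ℝ) (B : Set (Rn n)) (f : Rn n → ℝ) : ℝ≥0∞ :=
  sInf {σ : ℝ≥0∞ | ∃ s : ℝ, 0 < s ∧ σ = ENNReal.ofReal s ∧
    (wtMass w B)⁻¹ *
      (∫⁻ x in B, ENNReal.ofReal (phiLL (|f x| / s)) * ENNReal.ofReal (w x)) ≤ 1}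

/-- The weighted amalgam norm of `L log L` type, `‖f‖_{(L log L, L^q)^α(w;μ)}`. -/
def llogLAmalgam {n : ℕ} (q α : ℝ) (w μ : Rn n → ℝ) (f : Rn n → ℝ) : ℝ≥0∞ :=
  ⨆ (r : ℝ) (_ : 0 < r),
    (∫⁻ y, (wtMass w (ball y r) ^ (1/α - 1/q) * llogLOn w (ball y r) f) ^ q *
      ENNReal.ofReal (μ y)) ^ (1/q)

/-- Reverse Hölder inequality with exponent `s` and constant `CR`. -/
def RevHolder {n : ℕ} (w : Rn n → ℝ) (s CR : ℝ) : Prop :=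
  ∀ (y : Rn n) (r : ℝ), 0 < r →
    ((volume (ball y r))⁻¹ * ∫⁻ x in ball y r, ENNReal.ofReal (w x ^ s)) ^ (1/s) ≤
      ENNReal.ofReal CR * ((volume (ball y r))⁻¹ * wtMass w (ball y r))


section Aux

open MeasureTheory Metric ENNReal

private lemma ennreal_rpow_finset_sum {ι : Type*} (x : ℝ≥0∞) (hx : x ≠ 0) (hx' : x ≠ ⊤)
    (s : Finset ι) (a : ι → ℝ) : x ^ (∑ i ∈ s, a i) = ∏ i ∈ s, x ^ a i := by
  classical
  induction s using Finset.induction_on with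
  | empty => simp
  | @insert i s hi ih =>
    rw [Finset.sum_insert hi, Finset.prod_insert hi, ENNReal.rpow_add _ _ hx hx', ih]

private lemma holder_step {n : ℕ} (q : ℝ) (hq : 1 ≤ q) (w f : Rn n → ℝ)
    (hwm : Measurable w) (hwpos : ∀ x, 0 < w x) (hf : Measurable f)
    (y : Rn n) (r : ℝ) (hr : 0 < r) :
    (volume (ball y r))⁻¹ * ∫⁻ x in ball y r, ENNReal.ofReal |f x| ≤
      volume (ball y r) ^ (-(1/q)) * apFactor q w (ball y r) *
        (∫⁻ x in ball y r, ENNReal.ofReal |f x| ^ q * ENNReal.ofReal (w x)) ^ (1/q) := by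
  set B := ball y r with hBdef
  have hB0 : volume B ≠ 0 := (measure_ball_pos _ _ hr).ne'
  have hBt : volume B ≠ ⊤ := measure_ball_lt_top.ne
  have hW0 : ∀ x, ENNReal.ofReal (w x) ≠ 0 := fun x => (ENNReal.ofReal_pos.mpr (hwpos x)).ne'
  have hWt : ∀ x, ENNReal.ofReal (w x) ≠ ⊤ := fun x => ENNReal.ofReal_ne_top
  by_cases h1 : q = 1
  · subst h1
    rw [apFactor, if_pos rfl]
    set e := essInf (fun x => ENNReal.ofReal (w x)) (volume.restrict B) with hedef
    have hae : ∀ᵐ x ∂(volume.restrict B), e ≤ ENNReal.ofReal (w x) := ae_essInf_le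
    have key : (∫⁻ x in B, ENNReal.ofReal |f x|) ≤
        e⁻¹ * ∫⁻ x in B, ENNReal.ofReal |f x| * ENNReal.ofReal (w x) := by
      rw [← lintegral_const_mul (f := fun x => ENNReal.ofReal |f x| * ENNReal.ofReal (w x)) _
        ((hf.abs.ennreal_ofReal).mul hwm.ennreal_ofReal)]
      refine lintegral_mono_ae (hae.mono fun x hx => ?_)
      rcases eq_or_ne (f x) 0 with h0 | h0
      · simp [h0]
      · rcases eq_or_ne e 0 with he | he
        · rw [he, ENNReal.inv_zero, ENNReal.top_mul
            (mul_ne_zero (fun hh => h0 (abs_eq_zero.mp (by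
              simpa [ENNReal.ofReal_eq_zero] using le_antisymm (ENNReal.ofReal_eq_zero.mp hh) (abs_nonneg _))))
              (hW0 x))]
          exact le_top
        · have het : e ≠ ⊤ := (lt_of_le_of_lt hx ENNReal.ofReal_lt_top).ne
          calc ENNReal.ofReal |f x| = e⁻¹ * (ENNReal.ofReal |f x| * e) := by
                rw [mul_comm (ENNReal.ofReal |f x|) e, ← mul_assoc,
                  ENNReal.inv_mul_cancel he het, one_mul]
            _ ≤ e⁻¹ * (ENNReal.ofReal |f x| * ENNReal.ofReal (w x)) := by gcongr
    calc (volume B)⁻¹ * ∫⁻ x in B, ENNReal.ofReal |f x|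
        ≤ (volume B)⁻¹ * (e⁻¹ * ∫⁻ x in B, ENNReal.ofReal |f x| * ENNReal.ofReal (w x)) :=
          mul_le_mul_right key _
      _ = volume B ^ (-(1/(1:ℝ))) * e⁻¹ *
          (∫⁻ x in B, ENNReal.ofReal |f x| ^ (1:ℝ) * ENNReal.ofReal (w x)) ^ (1/(1:ℝ)) := by
          norm_num [ENNReal.rpow_neg_one, mul_assoc]
  · have hq1 : 1 < q := lt_of_le_of_ne hq (Ne.symm h1)
    have hqpos : 0 < q := lt_trans zero_lt_one hq1
    have hq0 : q ≠ 0 := hqpos.ne'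
    set q' : ℝ := q / (q - 1) with hq'def
    have hpq : q.HolderConjugate q' := Real.HolderConjugate.conjExponent hq1
    set F : Rn n → ℝ≥0∞ := fun x => ENNReal.ofReal |f x| * ENNReal.ofReal (w x) ^ (1/q)
      with hFdef
    set G : Rn n → ℝ≥0∞ := fun x => ENNReal.ofReal (w x) ^ (-(1/q)) with hGdef
    have hmF : Measurable F := (hf.abs.ennreal_ofReal).mul (hwm.ennreal_ofReal.pow_const _)
    have hmG : Measurable G := hwm.ennreal_ofReal.pow_const _
    have holder := ENNReal.lintegral_mul_le_Lp_mul_Lq (volume.restrict B) hpq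
      hmF.aemeasurable hmG.aemeasurable
    have hFG : ∀ x, (F * G) x = ENNReal.ofReal |f x| := by
      intro x
      show F x * G x = _
      rw [hFdef, hGdef]
      simp only
      rw [mul_assoc, ← ENNReal.rpow_add _ _ (hW0 x) (hWt x), add_neg_cancel,
        ENNReal.rpow_zero, mul_one]
    have hFq : ∀ x, F x ^ q = ENNReal.ofReal |f x| ^ q * ENNReal.ofReal (w x) := by
      intro x
      rw [hFdef]
      simp only
      rw [ENNReal.mul_rpow_of_nonneg _ _ hqpos.le, ← ENNReal.rpow_mul,
        one_div_mul_cancel hq0, ENNReal.rpow_one]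
    have hGq : ∀ x, G x ^ q' = ENNReal.ofReal (w x ^ (-(1/(q - 1)))) := by
      intro x
      rw [hGdef]
      simp only
      rw [← ENNReal.rpow_mul, ENNReal.ofReal_rpow_of_pos (hwpos x)]
      congr 1
      rw [hq'def]
      field_simp
    have hq'exp : 1 / q' = (q - 1) / q := by
      rw [hq'def, one_div_div]
    simp only [hFG, hFq, hGq, hq'exp] at holder
    rw [apFactor, if_neg h1]
    set I := ∫⁻ x in B, ENNReal.ofReal |f x| ^ q * ENNReal.ofReal (w x) with hIdef
    set J := ∫⁻ x in B, ENNReal.ofReal (w x ^ (-(1/(q - 1)))) with hJdef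
    have hrw : volume B ^ (-(1/q)) * ((volume B)⁻¹ * J) ^ ((q - 1)/q) * I ^ (1/q) =
        (volume B)⁻¹ * (I ^ (1/q) * J ^ ((q - 1)/q)) := by
      rw [ENNReal.mul_rpow_of_nonneg _ _ (div_nonneg (by linarith) hqpos.le),
        ENNReal.inv_rpow, ← ENNReal.rpow_neg, ← mul_assoc, ← mul_assoc,
        ← ENNReal.rpow_add _ _ hB0 hBt]
      have : -(1/q) + -((q - 1)/q) = (-1 : ℝ) := by field_simp; ring
      rw [this, ENNReal.rpow_neg_one]
      ring
    rw [hrw]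
    exact mul_le_mul_right holder _

end Aux

/-- the multilinear `A_{P⃗}` condition on a single ball yields the
multilinear Hölder-type estimate for averages on that ball. -/
theorem multiAP_ball_Holder
    {n m : ℕ} (hm : 1 ≤ m) (p : ℝ) (pk : Fin m → ℝ) (hpk : ∀ k, 1 ≤ pk k)
    (hp : 1/p = ∑ k, 1/pk k)
    (w : Fin m → Rn n → ℝ) (hw : ∀ k, IsWeight (w k))
    (hwdual : ∀ k, pk k > 1 → LocallyIntegrable (fun x => w k x ^ (-(1/(pk k - 1)))) volume)
    (y : Rn n) (r : ℝ) (hr : 0 < r) (CW : ℝ)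
    (hAP : ((volume (ball y r))⁻¹ * wtMass (nuW p pk w) (ball y r)) ^ (1/p) *
        (∏ k, apFactor (pk k) (w k) (ball y r)) ≤ ENNReal.ofReal CW) :
    ∀ f : Fin m → Rn n → ℝ, (∀ k, Measurable (f k)) →
      (∏ k, (volume (ball y r))⁻¹ * ∫⁻ x in ball y r, ENNReal.ofReal |f k x|) ≤
        ENNReal.ofReal CW * wtMass (nuW p pk w) (ball y r) ^ (-(1/p)) *
          ∏ k, (∫⁻ x in ball y r,
            ENNReal.ofReal |f k x| ^ pk k * ENNReal.ofReal (w k x)) ^ (1/pk k) := by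
  intro f hf
  have hνmeas : Measurable (nuW p pk w) := by
    unfold nuW
    exact Finset.measurable_prod _ fun k _ => ((hw k).1).pow_const _
  set B := ball y r with hBdef
  have hB0 : volume B ≠ 0 := (measure_ball_pos _ _ hr).ne'
  have hBt : volume B ≠ ⊤ := measure_ball_lt_top.ne
  have hnem : Nonempty (Fin m) := ⟨⟨0, hm⟩⟩
  have h1p : 0 < 1/p := by
    rw [hp]
    exact Finset.sum_pos (fun k _ => by have := hpk k; positivity) Finset.univ_nonempty
  set ν := nuW p pk w with hνdef
  have hν0 : wtMass ν B ≠ 0 := by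
    intro h
    rw [wtMass, lintegral_eq_zero_iff hνmeas.ennreal_ofReal] at h
    have hfalse : ∀ᵐ x ∂(volume.restrict B), False := by
      refine h.mono fun x hx => ?_
      have hpos : 0 < ν x := Finset.prod_pos fun k _ => Real.rpow_pos_of_pos ((hw k).2.1 x) _
      simp only [Pi.zero_apply, ENNReal.ofReal_eq_zero] at hx
      linarith
    rw [Filter.eventually_false_iff_eq_bot, ae_eq_bot] at hfalse
    exact hB0 (by rw [← Measure.restrict_apply_univ (μ := volume) B, hfalse]; simp)
  set D := ∏ k, apFactor (pk k) (w k) B with hDdef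
  set I : Fin m → ℝ≥0∞ :=
    fun k => ∫⁻ x in B, ENNReal.ofReal |f k x| ^ pk k * ENNReal.ofReal (w k x) with hIdef
  have hstep : (∏ k, (volume B)⁻¹ * ∫⁻ x in B, ENNReal.ofReal |f k x|) ≤
      volume B ^ (-(1/p)) * D * ∏ k, I k ^ (1/pk k) := by
    calc (∏ k, (volume B)⁻¹ * ∫⁻ x in B, ENNReal.ofReal |f k x|)
        ≤ ∏ k, (volume B ^ (-(1/pk k)) * apFactor (pk k) (w k) B * I k ^ (1/pk k)) :=
          Finset.prod_le_prod' fun k _ =>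
            holder_step (pk k) (hpk k) (w k) (f k) (hw k).1 (hw k).2.1 (hf k) y r hr
      _ = (∏ k, volume B ^ (-(1/pk k))) * D * ∏ k, I k ^ (1/pk k) := by
          rw [Finset.prod_mul_distrib, Finset.prod_mul_distrib]
      _ = volume B ^ (-(1/p)) * D * ∏ k, I k ^ (1/pk k) := by
          have hsum : (∑ k, -(1/pk k)) = -(1/p) := by
            rw [hp, Finset.sum_neg_distrib]
          rw [← hsum, ennreal_rpow_finset_sum _ hB0 hBt]
  rcases eq_or_ne D 0 with hD | hD
  · calc (∏ k, (volume B)⁻¹ * ∫⁻ x in B, ENNReal.ofReal |f k x|)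
        ≤ volume B ^ (-(1/p)) * D * ∏ k, I k ^ (1/pk k) := hstep
      _ = 0 := by rw [hD, mul_zero, zero_mul]
      _ ≤ _ := zero_le
  · set a := ((volume B)⁻¹ * wtMass ν B) ^ (1/p) with hadef
    have ha0 : a ≠ 0 := by
      intro h
      rcases ENNReal.rpow_eq_zero_iff.mp h with ⟨hz, _⟩ | ⟨_, hneg⟩
      · exact (mul_ne_zero (ENNReal.inv_ne_zero.mpr hBt) hν0) hz
      · linarith
    have hat : a ≠ ⊤ := by
      intro h
      rw [h, ENNReal.top_mul hD] at hAP
      exact ENNReal.ofReal_ne_top (top_le_iff.mp hAP)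
    have hDle : D ≤ ENNReal.ofReal CW * a⁻¹ := by
      have h2 := mul_le_mul_right hAP a⁻¹
      rwa [← mul_assoc, ENNReal.inv_mul_cancel ha0 hat, one_mul, mul_comm (a⁻¹)] at h2
    have hBinv0 : (volume B)⁻¹ ≠ 0 := ENNReal.inv_ne_zero.mpr hBt
    have hBinvt : (volume B)⁻¹ ≠ ⊤ := ENNReal.inv_ne_top.mpr hB0
    have hx0 : ((volume B)⁻¹) ^ (1/p) ≠ 0 := by
      simp [ENNReal.rpow_eq_zero_iff, hBinv0, hBinvt]
    have hxt : ((volume B)⁻¹) ^ (1/p) ≠ ⊤ := by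
      simp [ENNReal.rpow_eq_top_iff, hBinv0, hBinvt]
    have hy0 : (volume B) ^ (1/p) ≠ 0 := by
      simp [ENNReal.rpow_eq_zero_iff, hB0, hBt]
    have hyt : (volume B) ^ (1/p) ≠ ⊤ := by
      simp [ENNReal.rpow_eq_top_iff, hB0, hBt]
    have hainv : a⁻¹ = volume B ^ (1/p) * (wtMass ν B ^ (1/p))⁻¹ := by
      rw [hadef, ENNReal.mul_rpow_of_nonneg _ _ h1p.le,
        ENNReal.mul_inv (Or.inl hx0) (Or.inl hxt), ENNReal.inv_rpow, inv_inv]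
    have hkey : volume B ^ (-(1/p)) * D ≤
        ENNReal.ofReal CW * wtMass ν B ^ (-(1/p)) := by
      calc volume B ^ (-(1/p)) * D
          ≤ volume B ^ (-(1/p)) * (ENNReal.ofReal CW * a⁻¹) := mul_le_mul_right hDle _
        _ = ENNReal.ofReal CW * wtMass ν B ^ (-(1/p)) := by
            rw [hainv, ENNReal.rpow_neg, ENNReal.rpow_neg]
            rw [mul_comm (ENNReal.ofReal CW), ← mul_assoc, ← mul_assoc,
              ENNReal.inv_mul_cancel hy0 hyt, one_mul, mul_comm]
    calc (∏ k, (volume B)⁻¹ * ∫⁻ x in B, ENNReal.ofReal |f k x|)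
        ≤ volume B ^ (-(1/p)) * D * ∏ k, I k ^ (1/pk k) := hstep
      _ ≤ ENNReal.ofReal CW * wtMass ν B ^ (-(1/p)) * ∏ k, I k ^ (1/pk k) :=
          mul_le_mul_left hkey _
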